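/- Gradient comparison between the objective and its Gaussian smoothing (Technical Lemma F). Let F : ℝ^d → ℝ be H_F-smooth. Then for every x ∈ ℝ^d and μ > 0, the Gaussian smoothed function F_μ(x) := ∫ F(x+μ·u) dγ(u) is differentiable and ‖∇F(x)‖² ≤ 2·‖∇F_μ(x)‖² + (μ²/2)·H_F²·(d+6)³. -/

import Mathlib

open MeasureTheory ProbabilityTheory Real
open scoped ENNReal NNReal

lemma abs_le_exp_quarter (t : ℝ) : |t| ≤ Real.exp (t^2/4) := by
  have h1 : (1 : ℝ) + t^2/8 ≤ Real.exp (t^2/8) := by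
    have := Real.add_one_le_exp (t^2/8); linarith
  have h2 : Real.exp (t^2/4) = Real.exp (t^2/8) * Real.exp (t^2/8) := by
    rw [← Real.exp_add]; ring_nf
  have h3 : (1 + t^2/8) * (1 + t^2/8) ≤ Real.exp (t^2/4) := by
    rw [h2]
    have h0 : (0:ℝ) ≤ 1 + t^2/8 := by positivity
    exact mul_le_mul h1 h1 h0 (Real.exp_nonneg _)
  have h4 : |t| ≤ (1 + t^2/8) * (1 + t^2/8) := by
    have ht : |t|^2 = t^2 := sq_abs t
    nlinarith [abs_nonneg t, sq_nonneg (|t| - 2), sq_nonneg (t^2 - 4), sq_nonneg (|t| * (|t| - 2))]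
  linarith

lemma sq_le_exp_quarter (t : ℝ) : t^2 ≤ 2 * Real.exp (t^2/4) := by
  have h1 : (1 : ℝ) + t^2/8 ≤ Real.exp (t^2/8) := by
    have := Real.add_one_le_exp (t^2/8); linarith
  have h2 : Real.exp (t^2/4) = Real.exp (t^2/8) * Real.exp (t^2/8) := by
    rw [← Real.exp_add]; ring_nf
  have h0 : (0:ℝ) ≤ 1 + t^2/8 := by positivity
  have h3 : (1 + t^2/8) * (1 + t^2/8) ≤ Real.exp (t^2/4) := by
    rw [h2]; exact mul_le_mul h1 h1 h0 (Real.exp_nonneg _)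
  nlinarith [sq_nonneg (t^2 - 8)]

lemma pdfReal_eq (x : ℝ) :
    gaussianPDFReal 0 1 x = (Real.sqrt (2 * π))⁻¹ * Real.exp (-(1/2) * x^2) := by
  simp [gaussianPDFReal]
  left; ring

lemma mul_pdf_eq (t : ℝ) :
    Real.exp (t^2/4) * gaussianPDFReal 0 1 t
      = (Real.sqrt (2 * π))⁻¹ * Real.exp (-(1/4) * t^2) := by
  rw [pdfReal_eq, mul_comm, mul_assoc, ← Real.exp_add]
  ring_nf

lemma integrable_exp_quarter_gaussian :
    Integrable (fun t : ℝ => Real.exp (t^2/4)) (gaussianReal 0 1) := by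
  rw [gaussianReal_of_var_ne_zero 0 one_ne_zero]
  refine (integrable_withDensity_iff (measurable_gaussianPDF 0 1)
    (ae_of_all _ fun x => ENNReal.ofReal_lt_top)).mpr ?_
  have : (fun t : ℝ => Real.exp (t^2/4) * (gaussianPDF 0 1 t).toReal)
      = fun t : ℝ => (Real.sqrt (2 * π))⁻¹ * Real.exp (-(1/4) * t^2) := by
    funext t
    rw [gaussianPDF, ENNReal.toReal_ofReal (gaussianPDFReal_nonneg 0 1 t), mul_pdf_eq]
  rw [this]
  exact (integrable_exp_neg_mul_sq (by norm_num : (0:ℝ) < 1/4)).const_mul _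

lemma integral_exp_quarter_gaussian :
    ∫ t, Real.exp (t^2/4) ∂(gaussianReal 0 1) ≤ 2 := by
  rw [gaussianReal_of_var_ne_zero 0 one_ne_zero]
  have hrw : (volume.withDensity (gaussianPDF 0 1))
      = volume.withDensity (fun x => ((gaussianPDFReal 0 1 x).toNNReal : ℝ≥0∞)) := rfl
  rw [hrw, integral_withDensity_eq_integral_smul
    ((measurable_gaussianPDFReal 0 1).real_toNNReal)]
  have : (fun t : ℝ => (gaussianPDFReal 0 1 t).toNNReal • Real.exp (t^2/4))
      = fun t : ℝ => (Real.sqrt (2 * π))⁻¹ * Real.exp (-(1/4) * t^2) := by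
    funext t
    simp only [NNReal.smul_def, smul_eq_mul]
    rw [Real.coe_toNNReal _ (gaussianPDFReal_nonneg 0 1 t), mul_comm, mul_pdf_eq]
  rw [this, integral_const_mul, integral_gaussian]
  rw [inv_mul_le_iff₀ (by positivity)]
  rw [show π / (1/4) = (2:ℝ)^2 * π by ring]
  rw [Real.sqrt_mul (by positivity), Real.sqrt_sq (by norm_num : (0:ℝ) ≤ 2)]
  nlinarith [Real.sq_sqrt (by positivity : (0:ℝ) ≤ 2*π), Real.sqrt_nonneg (2*π),
    Real.sqrt_nonneg π, Real.sq_sqrt (le_of_lt Real.pi_pos), Real.pi_gt_three]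

lemma integrable_abs_gaussian : Integrable (fun t : ℝ => |t|) (gaussianReal 0 1) :=
  integrable_exp_quarter_gaussian.mono' (measurable_abs.aestronglyMeasurable)
    (ae_of_all _ fun t => by
      rw [Real.norm_eq_abs, abs_abs]; exact abs_le_exp_quarter t)

lemma integral_abs_gaussian : ∫ t, |t| ∂(gaussianReal 0 1) ≤ 2 :=
  le_trans (integral_mono integrable_abs_gaussian integrable_exp_quarter_gaussian
    abs_le_exp_quarter) integral_exp_quarter_gaussian

lemma integrable_sq_gaussian : Integrable (fun t : ℝ => t^2) (gaussianReal 0 1) :=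
  (integrable_exp_quarter_gaussian.const_mul 2).mono'
    ((measurable_id.pow_const 2).aestronglyMeasurable)
    (ae_of_all _ fun t => by
      rw [Real.norm_eq_abs, abs_of_nonneg (sq_nonneg t)]; exact sq_le_exp_quarter t)

lemma integral_sq_gaussian : ∫ t, t^2 ∂(gaussianReal 0 1) ≤ 4 := by
  refine le_trans (integral_mono integrable_sq_gaussian
    (integrable_exp_quarter_gaussian.const_mul 2) sq_le_exp_quarter) ?_
  rw [integral_const_mul]
  linarith [integral_exp_quarter_gaussian]

lemma measurePreserving_eval_pi {d : ℕ} (i : Fin d) :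
    MeasurePreserving (Function.eval i)
      (Measure.pi fun _ : Fin d => gaussianReal 0 1) (gaussianReal 0 1) := by
  refine ⟨measurable_pi_apply i, ?_⟩
  ext s hs
  rw [Measure.map_apply (measurable_pi_apply i) hs, Set.eval_preimage,
    Measure.pi_pi]
  rw [Finset.prod_eq_single i (fun j _ hj => by simp [Function.update_of_ne hj])
    (by simp)]
  simp

/-- The standard Gaussian measure on `EuclideanSpace ℝ (Fin d)`, i.e. the `d`-fold
product of the standard Gaussian measure `N(0,1)` on `ℝ`. -/
noncomputable def stdGaussian (d : ℕ) : Measure (EuclideanSpace ℝ (Fin d)) :=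
  (Measure.pi fun _ : Fin d => gaussianReal 0 1).map
    (MeasurableEquiv.toLp 2 (Fin d → ℝ))

section helpers
variable {d : ℕ}

instance stdGaussian_isProb (d : ℕ) : IsProbabilityMeasure (stdGaussian d) :=
  Measure.isProbabilityMeasure_map
    (MeasurableEquiv.measurable _).aemeasurable

lemma integral_stdGaussian {E : Type*} [NormedAddCommGroup E] [NormedSpace ℝ E]
    (g : EuclideanSpace ℝ (Fin d) → E) :
    ∫ u, g u ∂(stdGaussian d)
      = ∫ y, g ((MeasurableEquiv.toLp 2 (Fin d → ℝ)) y)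
          ∂(Measure.pi fun _ : Fin d => gaussianReal 0 1) :=
  integral_map_equiv _ g

lemma integrable_stdGaussian_iff {E : Type*} [NormedAddCommGroup E]
    (g : EuclideanSpace ℝ (Fin d) → E) :
    Integrable g (stdGaussian d) ↔
      Integrable (fun y => g ((MeasurableEquiv.toLp 2 (Fin d → ℝ)) y))
        (Measure.pi fun _ : Fin d => gaussianReal 0 1) :=
  integrable_map_equiv _ g

lemma eval_symm_apply (y : Fin d → ℝ) (i : Fin d) :
    ((MeasurableEquiv.toLp 2 (Fin d → ℝ)) y) i = y i := rfl

lemma euclid_norm_le_sum_abs (u : EuclideanSpace ℝ (Fin d)) :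
    ‖u‖ ≤ ∑ i, |u i| := by
  rw [EuclideanSpace.norm_eq]
  refine le_trans (Real.sqrt_le_sqrt ?_) (le_of_eq (Real.sqrt_sq ?_))
  · simp only [Real.norm_eq_abs, sq_abs]
    have := Finset.sum_sq_le_sq_sum_of_nonneg (s := Finset.univ)
      (f := fun i => |u i|) (fun i _ => abs_nonneg _)
    simpa [sq_abs] using this
  · exact Finset.sum_nonneg fun i _ => abs_nonneg _

lemma euclid_norm_sq_eq (u : EuclideanSpace ℝ (Fin d)) :
    ‖u‖^2 = ∑ i, (u i)^2 := by
  rw [EuclideanSpace.norm_eq, Real.sq_sqrt]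
  · simp [sq_abs]
  · exact Finset.sum_nonneg fun i _ => sq_nonneg _

lemma integrable_coord_abs (i : Fin d) :
    Integrable (fun y : Fin d → ℝ => |y i|)
      (Measure.pi fun _ : Fin d => gaussianReal 0 1) :=
  ((measurePreserving_eval_pi i).integrable_comp
    (measurable_abs.aestronglyMeasurable)).mpr integrable_abs_gaussian

lemma integrable_coord_sq (i : Fin d) :
    Integrable (fun y : Fin d → ℝ => (y i)^2)
      (Measure.pi fun _ : Fin d => gaussianReal 0 1) :=
  ((measurePreserving_eval_pi i).integrable_comp
    ((measurable_id.pow_const 2).aestronglyMeasurable)).mpr integrable_sq_gaussian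

lemma integral_coord_abs (i : Fin d) :
    ∫ y, |y i| ∂(Measure.pi fun _ : Fin d => gaussianReal 0 1)
      = ∫ t, |t| ∂(gaussianReal 0 1) := by
  have h := integral_map (μ := Measure.pi fun _ : Fin d => gaussianReal 0 1)
    (φ := Function.eval i) (measurable_pi_apply i).aemeasurable
    (f := fun t => |t|) measurable_abs.aestronglyMeasurable
  rw [(measurePreserving_eval_pi i).map_eq] at h
  rw [h]

lemma integrable_norm_stdGaussian :
    Integrable (fun u : EuclideanSpace ℝ (Fin d) => ‖u‖) (stdGaussian d) := by
  rw [integrable_stdGaussian_iff]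
  refine Integrable.mono' (g := fun y => ∑ i, |y i|)
    (integrable_finset_sum _ fun i _ => integrable_coord_abs i) ?_ ?_
  · exact ((MeasurableEquiv.toLp 2 (Fin d → ℝ)).measurable.norm).aestronglyMeasurable
  · refine ae_of_all _ fun y => ?_
    rw [norm_norm]
    exact le_trans (euclid_norm_le_sum_abs _) (le_of_eq (by simp [eval_symm_apply]))

lemma integral_norm_stdGaussian :
    ∫ u, ‖u‖ ∂(stdGaussian d) ≤ 2 * d := by
  rw [integral_stdGaussian]
  have h1 : ∫ y, ‖(MeasurableEquiv.toLp 2 (Fin d → ℝ)) y‖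
        ∂(Measure.pi fun _ : Fin d => gaussianReal 0 1)
      ≤ ∫ y, ∑ i, |y i| ∂(Measure.pi fun _ : Fin d => gaussianReal 0 1) := by
    refine integral_mono ?_ (integrable_finset_sum _ fun i _ => integrable_coord_abs i) ?_
    · exact (integrable_stdGaussian_iff _).mp integrable_norm_stdGaussian
    · intro y
      exact le_trans (euclid_norm_le_sum_abs _) (le_of_eq (by simp [eval_symm_apply]))
  refine h1.trans ?_
  rw [integral_finset_sum _ fun i _ => integrable_coord_abs i]
  calc (∑ i : Fin d, ∫ y, |y i| ∂(Measure.pi fun _ : Fin d => gaussianReal 0 1))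
      = ∑ i : Fin d, ∫ t, |t| ∂(gaussianReal 0 1) := by
        exact Finset.sum_congr rfl fun i _ => integral_coord_abs i
    _ ≤ ∑ i : Fin d, 2 := Finset.sum_le_sum fun i _ => integral_abs_gaussian
    _ = 2 * d := by simp [mul_comm]

lemma integrable_norm_sq_stdGaussian :
    Integrable (fun u : EuclideanSpace ℝ (Fin d) => ‖u‖^2) (stdGaussian d) := by
  rw [integrable_stdGaussian_iff]
  refine Integrable.mono' (g := fun y => ∑ i, (y i)^2)
    (integrable_finset_sum _ fun i _ => integrable_coord_sq i) ?_ ?_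
  · exact (((MeasurableEquiv.toLp 2 (Fin d → ℝ)).measurable.norm).pow_const
      2).aestronglyMeasurable
  · refine ae_of_all _ fun y => ?_
    rw [Real.norm_eq_abs, abs_of_nonneg (sq_nonneg _), euclid_norm_sq_eq]
    exact le_of_eq (by simp [eval_symm_apply])

end helpers

section analytic
variable {d : ℕ} {F : EuclideanSpace ℝ (Fin d) → ℝ} {H_F : ℝ}

lemma toDual_gradient_F (f : EuclideanSpace ℝ (Fin d) → ℝ) (x : EuclideanSpace ℝ (Fin d)) :
    InnerProductSpace.toDual ℝ _ (gradient f x) = fderiv ℝ f x := by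
  rw [gradient, LinearIsometryEquiv.apply_symm_apply]

lemma norm_gradient_eq (f : EuclideanSpace ℝ (Fin d) → ℝ) (x : EuclideanSpace ℝ (Fin d)) :
    ‖gradient f x‖ = ‖fderiv ℝ f x‖ := by
  rw [← toDual_gradient_F f x, LinearIsometryEquiv.norm_map]

lemma fderiv_lip (hH_F : 0 ≤ H_F) (hFgradLip : LipschitzWith H_F.toNNReal (gradient F))
    (a b : EuclideanSpace ℝ (Fin d)) :
    ‖fderiv ℝ F a - fderiv ℝ F b‖ ≤ H_F * ‖a - b‖ := by
  have h := hFgradLip.dist_le_mul a b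
  rw [dist_eq_norm, dist_eq_norm, Real.coe_toNNReal _ hH_F] at h
  calc ‖fderiv ℝ F a - fderiv ℝ F b‖
      = ‖InnerProductSpace.toDual ℝ _ (gradient F a - gradient F b)‖ := by
        rw [map_sub, toDual_gradient_F, toDual_gradient_F]
    _ = ‖gradient F a - gradient F b‖ := LinearIsometryEquiv.norm_map _ _
    _ ≤ H_F * ‖a - b‖ := h

lemma fderiv_norm_le (hH_F : 0 ≤ H_F) (hFgradLip : LipschitzWith H_F.toNNReal (gradient F))
    (a b : EuclideanSpace ℝ (Fin d)) :
    ‖fderiv ℝ F a‖ ≤ ‖fderiv ℝ F b‖ + H_F * ‖a - b‖ := by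
  have := fderiv_lip hH_F hFgradLip a b
  have h2 := norm_sub_norm_le (fderiv ℝ F a) (fderiv ℝ F b)
  linarith

lemma F_growth (hH_F : 0 ≤ H_F) (hFdiff : Differentiable ℝ F)
    (hFgradLip : LipschitzWith H_F.toNNReal (gradient F))
    (y z : EuclideanSpace ℝ (Fin d)) :
    ‖F z - F y‖ ≤ (‖fderiv ℝ F y‖ + H_F * ‖z - y‖) * ‖z - y‖ := by
  refine Convex.norm_image_sub_le_of_norm_fderiv_le
    (s := Metric.closedBall y ‖z - y‖) (fun w _ => hFdiff w) ?_
    (convex_closedBall _ _) (Metric.mem_closedBall_self (norm_nonneg _)) ?_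
  · intro w hw
    rw [Metric.mem_closedBall, dist_eq_norm] at hw
    have := fderiv_norm_le hH_F hFgradLip w y
    nlinarith [norm_nonneg (w - y)]
  · rw [Metric.mem_closedBall, dist_eq_norm]

lemma continuous_fderiv_F (hFgradLip : LipschitzWith H_F.toNNReal (gradient F)) :
    Continuous (fderiv ℝ F) := by
  have h : fderiv ℝ F = fun x => InnerProductSpace.toDual ℝ _ (gradient F x) :=
    funext fun x => (toDual_gradient_F F x).symm
  rw [h]
  exact (LinearIsometryEquiv.continuous _).comp hFgradLip.continuous

lemma hasFDerivAt_smoothed (hH_F : 0 ≤ H_F) (hFdiff : Differentiable ℝ F)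
    (hFgradLip : LipschitzWith H_F.toNNReal (gradient F))
    {μ : ℝ} (hμ : 0 < μ) (x₀ : EuclideanSpace ℝ (Fin d)) :
    HasFDerivAt (fun x => ∫ u, F (x + μ • u) ∂(stdGaussian d))
      (∫ u, fderiv ℝ F (x₀ + μ • u) ∂(stdGaussian d)) x₀ := by
  have hcont : Continuous F := hFdiff.continuous
  have hmap : ∀ x : EuclideanSpace ℝ (Fin d),
      Continuous (fun u : EuclideanSpace ℝ (Fin d) => x + μ • u) :=
    fun x => continuous_const.add (continuous_id.const_smul μ)
  have hnsmul : ∀ u : EuclideanSpace ℝ (Fin d), ‖μ • u‖ = μ * ‖u‖ := fun u => by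
    rw [norm_smul, Real.norm_eq_abs, abs_of_pos hμ]
  refine hasFDerivAt_integral_of_dominated_of_fderiv_le
    (F' := fun x u => fderiv ℝ F (x + μ • u))
    (bound := fun u => ‖fderiv ℝ F x₀‖ + H_F * (1 + μ * ‖u‖))
    (s := Metric.ball x₀ 1) (Metric.ball_mem_nhds x₀ one_pos) ?_ ?_ ?_ ?_ ?_ ?_
  · exact Filter.Eventually.of_forall fun x =>
      (hcont.comp (hmap x)).aestronglyMeasurable
  · -- Integrable (fun u => F (x₀ + μ • u))
    refine Integrable.mono'
      (g := fun u => ‖F x₀‖ + ((‖fderiv ℝ F x₀‖ * μ) * ‖u‖ + (H_F * μ^2) * ‖u‖^2))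
      ?_ (hcont.comp (hmap x₀)).aestronglyMeasurable ?_
    · exact (integrable_const _).add
        ((integrable_norm_stdGaussian.const_mul _).add
          (integrable_norm_sq_stdGaussian.const_mul _))
    · refine ae_of_all _ fun u => ?_
      show ‖F (x₀ + μ • u)‖
        ≤ ‖F x₀‖ + ((‖fderiv ℝ F x₀‖ * μ) * ‖u‖ + (H_F * μ^2) * ‖u‖^2)
      have h := F_growth hH_F hFdiff hFgradLip x₀ (x₀ + μ • u)
      have hz : x₀ + μ • u - x₀ = μ • u := by abel
      rw [hz, hnsmul] at h
      have htri : ‖F (x₀ + μ • u)‖ - ‖F x₀‖ ≤ ‖F (x₀ + μ • u) - F x₀‖ :=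
        norm_sub_norm_le _ _
      have hexp : (‖fderiv ℝ F x₀‖ + H_F * (μ * ‖u‖)) * (μ * ‖u‖)
          = (‖fderiv ℝ F x₀‖ * μ) * ‖u‖ + (H_F * μ^2) * ‖u‖^2 := by ring
      linarith [hexp ▸ h]
  · exact ((continuous_fderiv_F hFgradLip).comp (hmap x₀)).aestronglyMeasurable
  · refine ae_of_all _ fun u x hx => ?_
    show ‖fderiv ℝ F (x + μ • u)‖ ≤ ‖fderiv ℝ F x₀‖ + H_F * (1 + μ * ‖u‖)
    have h := fderiv_norm_le hH_F hFgradLip (x + μ • u) x₀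
    have hz : x + μ • u - x₀ = (x - x₀) + μ • u := by abel
    rw [hz] at h
    have h2 : ‖(x - x₀) + μ • u‖ ≤ ‖x - x₀‖ + μ * ‖u‖ := by
      refine le_trans (norm_add_le _ _) ?_
      rw [hnsmul]
    have h3 : ‖x - x₀‖ ≤ 1 := by
      rw [Metric.mem_ball, dist_eq_norm] at hx
      linarith
    have h4 : H_F * ‖x - x₀ + μ • u‖ ≤ H_F * (1 + μ * ‖u‖) :=
      mul_le_mul_of_nonneg_left (by linarith) hH_F
    linarith
  · exact (integrable_const _).add
      (((integrable_const 1).add (integrable_norm_stdGaussian.const_mul μ)).const_mul H_F)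
  · refine ae_of_all _ fun u x _ => ?_
    have h1 : HasFDerivAt (fun x : EuclideanSpace ℝ (Fin d) => x + μ • u)
        (ContinuousLinearMap.id ℝ _) x := (hasFDerivAt_id x).add_const _
    have h2 := (hFdiff (x + μ • u)).hasFDerivAt
    have := h2.comp x h1
    simpa [Function.comp_def] using this
end analytic

set_option maxHeartbeats 1000000 in
/-- Gradient comparison between the objective and its Gaussian smoothing
(Technical Lemma F). -/
theorem gradient_comparison_smoothing
    (d : ℕ) (hd : 0 < d)
    (F : EuclideanSpace ℝ (Fin d) → ℝ)
    (H_F : ℝ) (hH_F : 0 ≤ H_F)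
    (hFdiff : Differentiable ℝ F)
    (hFgradLip : LipschitzWith H_F.toNNReal (gradient F))
    (x : EuclideanSpace ℝ (Fin d)) (μ : ℝ) (hμ : 0 < μ)
    (Fμ : EuclideanSpace ℝ (Fin d) → ℝ)
    (hFμ : ∀ y, Fμ y = ∫ u, F (y + μ • u) ∂(stdGaussian d)) :
    Differentiable ℝ Fμ ∧
      ‖gradient F x‖ ^ 2
        ≤ 2 * ‖gradient Fμ x‖ ^ 2 + (μ ^ 2 / 2) * H_F ^ 2 * ((d : ℝ) + 6) ^ 3 := by
  have hFμ' : Fμ = fun y => ∫ u, F (y + μ • u) ∂(stdGaussian d) := funext hFμ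
  have hderiv : ∀ x₀, HasFDerivAt Fμ (∫ u, fderiv ℝ F (x₀ + μ • u) ∂(stdGaussian d)) x₀ := by
    intro x₀; rw [hFμ']; exact hasFDerivAt_smoothed hH_F hFdiff hFgradLip hμ x₀
  have hFμdiff : Differentiable ℝ Fμ := fun x₀ => (hderiv x₀).differentiableAt
  refine ⟨hFμdiff, ?_⟩
  -- integrability of fderiv family
  have hmap : Continuous (fun u : EuclideanSpace ℝ (Fin d) => x + μ • u) :=
    continuous_const.add (continuous_id.const_smul μ)
  have hnsmul : ∀ u : EuclideanSpace ℝ (Fin d), ‖μ • u‖ = μ * ‖u‖ := fun u => by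
    rw [norm_smul, Real.norm_eq_abs, abs_of_pos hμ]
  have hint : Integrable (fun u => fderiv ℝ F (x + μ • u)) (stdGaussian d) := by
    refine Integrable.mono' (g := fun u => ‖fderiv ℝ F x‖ + (H_F * μ) * ‖u‖)
      ((integrable_const _).add (integrable_norm_stdGaussian.const_mul _))
      (((continuous_fderiv_F hFgradLip).comp hmap).aestronglyMeasurable) ?_
    refine ae_of_all _ fun u => ?_
    show ‖fderiv ℝ F (x + μ • u)‖ ≤ ‖fderiv ℝ F x‖ + (H_F * μ) * ‖u‖
    have h := fderiv_lip hH_F hFgradLip (x + μ • u) x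
    have hz : x + μ • u - x = μ • u := by abel
    rw [hz, hnsmul] at h
    have h2 := norm_sub_norm_le (fderiv ℝ F (x + μ • u)) (fderiv ℝ F x)
    have : H_F * (μ * ‖u‖) = (H_F * μ) * ‖u‖ := by ring
    linarith [this ▸ h]
  -- the difference bound
  have hfd : fderiv ℝ Fμ x = ∫ u, fderiv ℝ F (x + μ • u) ∂(stdGaussian d) :=
    (hderiv x).fderiv
  have hdiffbound : ‖fderiv ℝ Fμ x - fderiv ℝ F x‖ ≤ H_F * μ * (2 * d) := by
    have hsub : fderiv ℝ Fμ x - fderiv ℝ F x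
        = ∫ u, (fderiv ℝ F (x + μ • u) - fderiv ℝ F x) ∂(stdGaussian d) := by
      rw [integral_sub hint (integrable_const _), integral_const]
      simp [hfd]
    rw [hsub]
    refine le_trans (norm_integral_le_integral_norm _) ?_
    have hmono : ∫ u, ‖fderiv ℝ F (x + μ • u) - fderiv ℝ F x‖ ∂(stdGaussian d)
        ≤ ∫ u, (H_F * μ) * ‖u‖ ∂(stdGaussian d) := by
      refine integral_mono (hint.sub (integrable_const _)).norm
        (integrable_norm_stdGaussian.const_mul _) ?_
      intro u
      have h := fderiv_lip hH_F hFgradLip (x + μ • u) x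
      have hz : x + μ • u - x = μ • u := by abel
      rw [hz, hnsmul] at h
      calc ‖fderiv ℝ F (x + μ • u) - fderiv ℝ F x‖ ≤ H_F * (μ * ‖u‖) := h
        _ = (H_F * μ) * ‖u‖ := by ring
    refine hmono.trans ?_
    rw [integral_const_mul]
    have := integral_norm_stdGaussian (d := d)
    have hHμ : 0 ≤ H_F * μ := mul_nonneg hH_F hμ.le
    calc H_F * μ * ∫ u, ‖u‖ ∂(stdGaussian d) ≤ H_F * μ * (2 * d) :=
        mul_le_mul_of_nonneg_left this hHμ
      _ = H_F * μ * (2 * d) := rfl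
  have ha : ‖gradient F x‖ = ‖fderiv ℝ F x‖ := norm_gradient_eq F x
  have hb : ‖gradient Fμ x‖ = ‖fderiv ℝ Fμ x‖ := norm_gradient_eq Fμ x
  have htri : ‖fderiv ℝ F x‖ ≤ ‖fderiv ℝ Fμ x‖ + ‖fderiv ℝ Fμ x - fderiv ℝ F x‖ := by
    have h := norm_sub_le (fderiv ℝ Fμ x) (fderiv ℝ Fμ x - fderiv ℝ F x)
    simpa using h
  rw [ha, hb]
  set a := ‖fderiv ℝ F x‖ with ha'
  set b := ‖fderiv ℝ Fμ x‖ with hb'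
  set K := 2 * H_F * μ * (d:ℝ) with hK
  have hd' : (0:ℝ) ≤ d := Nat.cast_nonneg d
  have hK0 : 0 ≤ K := by
    have := mul_nonneg (mul_nonneg (mul_nonneg (by norm_num : (0:ℝ) ≤ 2) hH_F) hμ.le) hd'
    simpa [hK] using this
  have habK : a ≤ b + K := by
    have hc : ‖fderiv ℝ Fμ x - fderiv ℝ F x‖ ≤ K := by
      calc ‖fderiv ℝ Fμ x - fderiv ℝ F x‖ ≤ H_F * μ * (2 * d) := hdiffbound
        _ = K := by rw [hK]; ring
    linarith
  have hsq : a^2 ≤ 2 * b^2 + 2 * K^2 := by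
    have h1 : a^2 ≤ (b + K)^2 := by
      have h0 : 0 ≤ a := norm_nonneg _
      nlinarith
    nlinarith [sq_nonneg (b - K)]
  have h9 : 0 ≤ (H_F^2 * μ^2 / 2) * (((d:ℝ)+6)^3 - 16 * (d:ℝ)^2) := by
    refine mul_nonneg (by positivity) ?_
    have hre : ((d:ℝ)+6)^3 - 16 * (d:ℝ)^2
        = (d:ℝ)^3 + 2*(d:ℝ)^2 + 108*(d:ℝ) + 216 := by ring
    rw [hre]; positivity
  have hexpand : (H_F^2 * μ^2 / 2) * (((d:ℝ)+6)^3 - 16 * (d:ℝ)^2)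
      = (μ ^ 2 / 2) * H_F ^ 2 * ((d : ℝ) + 6) ^ 3 - 2 * (2 * H_F * μ * (d:ℝ))^2 := by
    ring
  have hKfin : 2 * K^2 ≤ (μ ^ 2 / 2) * H_F ^ 2 * ((d : ℝ) + 6) ^ 3 := by
    rw [hK]; linarith [hexpand ▸ h9]
  linarith
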